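/- Let p ≥ 3 be a prime and let i, m be integers with 1 ≤ i ≤ p-1 and 1 ≤ m ≤ p. Then p divides the (p-1)-restricted Stirling number of the second kind S(i+p, m)_{≤ p-1}. -/

import Mathlib

/-- `r`-restricted Stirling number of the second kind: number of partitions of an
`n`-set into `k` nonempty blocks, each of size at most `r`. -/
noncomputable def stirlingRes (n k r : ℕ) : ℕ :=
  Nat.card {P : Finpartition (Finset.univ : Finset (Fin n)) //
    P.parts.card = k ∧ ∀ b ∈ P.parts, b.card ≤ r}

open Finset Equiv

section PermPart

variable {γ δ ε : Type*} [DecidableEq γ] [DecidableEq δ] [DecidableEq ε]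
  [Fintype γ] [Fintype δ] [Fintype ε]

/-- Image of a finpartition of `univ` under an equivalence of types. -/
def permPart (e : γ ≃ δ) (P : Finpartition (Finset.univ : Finset γ)) :
    Finpartition (Finset.univ : Finset δ) where
  parts := P.parts.image (fun b => b.map e.toEmbedding)
  supIndep := by
    rw [Finset.supIndep_iff_pairwiseDisjoint]
    rintro b hb c hc hbc
    simp only [coe_image, Set.mem_image, mem_coe] at hb hc
    obtain ⟨b', hb', rfl⟩ := hb
    obtain ⟨c', hc', rfl⟩ := hc
    have hne : b' ≠ c' := by rintro rfl; exact hbc rfl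
    have := P.disjoint hb' hc' hne
    simpa only [Function.onFun, id] using (Finset.disjoint_map e.toEmbedding).2 this
  sup_parts := by
    ext x
    simp only [Finset.mem_sup, mem_image, id, mem_univ, iff_true]
    obtain ⟨b, hb, hx⟩ := P.exists_mem (Finset.mem_univ (e.symm x))
    exact ⟨b.map e.toEmbedding, ⟨b, hb, rfl⟩,
      Finset.mem_map.2 ⟨e.symm x, hx, by simp⟩⟩
  bot_notMem := by
    simp only [bot_eq_empty, mem_image]
    rintro ⟨b, hb, hb0⟩
    rw [Finset.map_eq_empty] at hb0
    apply P.bot_notMem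
    rw [bot_eq_empty, ← hb0]
    exact hb

lemma permPart_parts (e : γ ≃ δ) (P : Finpartition (Finset.univ : Finset γ)) :
    (permPart e P).parts = P.parts.image (fun b => b.map e.toEmbedding) := rfl

lemma permPart_parts_card (e : γ ≃ δ) (P : Finpartition (Finset.univ : Finset γ)) :
    (permPart e P).parts.card = P.parts.card :=
  Finset.card_image_of_injective _ (Finset.map_injective e.toEmbedding)

lemma permPart_permPart (e : γ ≃ δ) (f : δ ≃ ε)
    (P : Finpartition (Finset.univ : Finset γ)) :
    permPart f (permPart e P) = permPart (e.trans f) P := by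
  ext b
  simp only [permPart_parts, Finset.image_image, mem_image, Function.comp]
  constructor
  · rintro ⟨c, hc, rfl⟩
    exact ⟨c, hc, by rw [Finset.map_map]; rfl⟩
  · rintro ⟨c, hc, rfl⟩
    exact ⟨c, hc, by rw [Finset.map_map]; rfl⟩

lemma permPart_refl (P : Finpartition (Finset.univ : Finset γ)) :
    permPart (Equiv.refl γ) P = P := by
  ext b
  simp [permPart_parts]

/-- The subtype of restricted finpartitions counted by `stirlingRes`. -/
def RP (γ : Type*) [DecidableEq γ] [Fintype γ] (m r : ℕ) : Type _ :=
  {P : Finpartition (Finset.univ : Finset γ) //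
    P.parts.card = m ∧ ∀ b ∈ P.parts, b.card ≤ r}

instance (m r : ℕ) : Finite (RP γ m r) := by
  unfold RP; infer_instance

/-- `RP` transported along an equivalence of base types. -/
def rpCongr (m r : ℕ) (e : γ ≃ δ) : RP γ m r ≃ RP δ m r where
  toFun P := ⟨permPart e P.1, by
    refine ⟨by rw [permPart_parts_card]; exact P.2.1, ?_⟩
    intro b hb
    rw [permPart_parts, mem_image] at hb
    obtain ⟨c, hc, rfl⟩ := hb
    rw [Finset.card_map]
    exact P.2.2 c hc⟩
  invFun P := ⟨permPart e.symm P.1, by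
    refine ⟨by rw [permPart_parts_card]; exact P.2.1, ?_⟩
    intro b hb
    rw [permPart_parts, mem_image] at hb
    obtain ⟨c, hc, rfl⟩ := hb
    rw [Finset.card_map]
    exact P.2.2 c hc⟩
  left_inv P := by
    apply Subtype.ext
    show permPart e.symm (permPart e P.1) = P.1
    rw [permPart_permPart, Equiv.self_trans_symm, permPart_refl]
  right_inv P := by
    apply Subtype.ext
    show permPart e (permPart e.symm P.1) = P.1
    rw [permPart_permPart, Equiv.symm_trans_self, permPart_refl]

lemma rpCongr_pow (m r : ℕ) (σ : Equiv.Perm γ) (k : ℕ) (P : RP γ m r) :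
    ((rpCongr m r σ) ^ k) P = ⟨permPart (σ ^ k) P.1, ((rpCongr m r (σ ^ k)) P).2⟩ := by
  induction k with
  | zero =>
    apply Subtype.ext
    show P.1 = permPart (σ ^ 0) P.1
    rw [pow_zero]
    exact (permPart_refl P.1).symm
  | succ k ih =>
    have h1 : ((rpCongr m r σ) ^ (k + 1)) P = (rpCongr m r σ) (((rpCongr m r σ) ^ k) P) := by
      rw [pow_succ']; rfl
    apply Subtype.ext
    rw [h1, ih]
    show permPart σ (permPart (σ ^ k) P.1) = permPart (σ ^ (k + 1)) P.1
    rw [permPart_permPart]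
    congr 1
    ext x
    rw [pow_succ']
    rfl

lemma map_perm_one (b : Finset γ) : b.map ((1 : Equiv.Perm γ).toEmbedding) = b := by
  ext x
  simp [Finset.mem_map]
  exact Iff.rfl

lemma map_perm_mul (f g : Equiv.Perm γ) (b : Finset γ) :
    b.map ((f * g).toEmbedding) = (b.map g.toEmbedding).map f.toEmbedding := by
  rw [Finset.map_map]
  rfl

end PermPart

theorem stmt_13 (p i m : ℕ) (hp : p.Prime) (hp3 : 3 ≤ p) (hi1 : 1 ≤ i) (hi2 : i ≤ p - 1)
    (hm1 : 1 ≤ m) (hm2 : m ≤ p) :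
    p ∣ stirlingRes (i + p) m (p - 1) := by
  classical
  haveI : Fact p.Prime := ⟨hp⟩
  obtain ⟨n, rfl⟩ : ∃ n, p = n + 2 := ⟨p - 2, by omega⟩
  set p := n + 2 with hpdef
  -- the base type
  set γ := (Fin i ⊕ Fin p) with hγ
  -- transfer to the sum type
  have hcard0 : stirlingRes (i + p) m (p - 1) = Nat.card (RP γ m (p - 1)) := by
    have : stirlingRes (i + p) m (p - 1) = Nat.card (RP (Fin (i + p)) m (p - 1)) := rfl
    rw [this]
    exact Nat.card_congr (rpCongr m (p - 1) finSumFinEquiv.symm)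
  rw [hcard0]
  -- the rotation
  set ρ : Equiv.Perm (Fin p) := finRotate p with hρdef
  have hρord : orderOf ρ = p := by
    rw [← Equiv.Perm.lcm_cycleType, cycleType_finRotate, Multiset.lcm_singleton, normalize_eq]
  have hρp : ρ ^ p = 1 := by
    have h := pow_orderOf_eq_one ρ
    rwa [hρord] at h
  haveI : NeZero p := ⟨by omega⟩
  open Fin.NatCast in
  have hρpow : ∀ (k : ℕ) (x : Fin p), (ρ ^ k) x = x + (k : Fin p) := by
    intro k
    induction k with
    | zero => intro x; simp
    | succ k ih =>
      intro x
      rw [pow_succ, Equiv.Perm.mul_apply, ih (ρ x)]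
      show (finRotate (n + 1 + 1)) x + (k : Fin p) = x + ((k : ℕ) + 1 : ℕ)
      rw [finRotate_succ_apply]
      push_cast
      abel
  -- the permutation of γ
  set σ : Equiv.Perm γ := Equiv.Perm.sumCongrHom (Fin i) (Fin p) (1, ρ) with hσdef
  have hσpow : ∀ k : ℕ, σ ^ k = Equiv.Perm.sumCongrHom (Fin i) (Fin p) (1, ρ ^ k) := by
    intro k
    rw [hσdef, ← map_pow, Prod.pow_mk, one_pow]
  have hσp : σ ^ p = 1 := by
    rw [hσpow, hρp]
    exact map_one (Equiv.Perm.sumCongrHom (Fin i) (Fin p))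
  have hσinl : ∀ (k : ℕ) (a : Fin i), (σ ^ k) (Sum.inl a) = Sum.inl a := by
    intro k a; rw [hσpow]; rfl
  have hσinr : ∀ (k : ℕ) (y : Fin p), (σ ^ k) (Sum.inr y) = Sum.inr ((ρ ^ k) y) := by
    intro k y; rw [hσpow]; rfl
  -- the induced permutation of the restricted partitions
  set τ : Equiv.Perm (RP γ m (p - 1)) := rpCongr m (p - 1) σ with hτdef
  have hτp : τ ^ p = 1 := by
    ext P
    rw [Equiv.Perm.one_apply, hτdef, rpCongr_pow, hσp]
    exact Subtype.ext (permPart_refl P.1)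
  -- the cyclic group generated by τ is a p-group
  have hPG : IsPGroup p (Subgroup.zpowers τ) := by
    intro g
    refine ⟨1, ?_⟩
    obtain ⟨k, hk⟩ := g.2
    have hg : (g : Equiv.Perm (RP γ m (p - 1))) ^ p = 1 := by
      rw [← hk, ← zpow_natCast, ← zpow_mul, mul_comm, zpow_mul, zpow_natCast, hτp, one_zpow]
    apply Subtype.ext
    rw [pow_one]
    push_cast
    rw [hg]
  -- No fixed points
  haveI hempty : IsEmpty (MulAction.fixedPoints (Subgroup.zpowers τ) (RP γ m (p - 1))) := by
    constructor
    rintro ⟨P, hP⟩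
    have hfix : τ P = P := by
      have := hP (⟨τ, Subgroup.mem_zpowers τ⟩ : Subgroup.zpowers τ)
      simpa [Subgroup.smul_def, Equiv.Perm.smul_def] using this
    have hinv : permPart σ P.1 = P.1 := congrArg Subtype.val hfix
    obtain ⟨hcard, hsize⟩ := P.2
    -- membership facts
    have hmem : ∀ b ∈ P.1.parts, b.map σ.toEmbedding ∈ P.1.parts := by
      intro b hb
      have hparts : (permPart σ P.1).parts = P.1.parts := by rw [hinv]
      rw [← hparts, permPart_parts, mem_image]
      exact ⟨b, hb, rfl⟩
    have hmapsucc : ∀ (k : ℕ) (b : Finset γ),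
        b.map ((σ ^ (k + 1)).toEmbedding) = (b.map σ.toEmbedding).map ((σ ^ k).toEmbedding) := by
      intro k b
      rw [pow_succ, map_perm_mul]
    have hmemk : ∀ (k : ℕ), ∀ b ∈ P.1.parts, b.map ((σ ^ k).toEmbedding) ∈ P.1.parts := by
      intro k
      induction k with
      | zero =>
        intro b hb
        rwa [pow_zero, map_perm_one]
      | succ k ih =>
        intro b hb
        rw [hmapsucc]
        exact ih _ (hmem b hb)
    -- the block containing `inr 0`
    have h0p : (0 : ℕ) < p := by omega
    set x₀ : γ := Sum.inr (⟨0, h0p⟩ : Fin p) with hx₀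
    obtain ⟨b₀, hb₀P, hx₀b⟩ := P.1.exists_mem (Finset.mem_univ x₀)
    have hb₀size : b₀.card ≤ p - 1 := hsize b₀ hb₀P
    -- Claim A : b₀ is not invariant
    have hA : b₀.map σ.toEmbedding ≠ b₀ := by
      intro h
      have hk : ∀ k : ℕ, b₀.map ((σ ^ k).toEmbedding) = b₀ := by
        intro k
        induction k with
        | zero => rw [pow_zero, map_perm_one]
        | succ k ih => rw [hmapsucc, h, ih]
      have hall : ∀ y : Fin p, Sum.inr y ∈ b₀ := by
        intro y
        have h1 : (σ ^ (y.val)) x₀ ∈ b₀.map ((σ ^ (y.val)).toEmbedding) :=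
          Finset.mem_map_of_mem _ hx₀b
        rw [hk] at h1
        have h2 : (σ ^ (y.val)) x₀ = Sum.inr y := by
          rw [hx₀, hσinr, hρpow]
          congr 1
          have hzero : (⟨0, h0p⟩ : Fin p) = 0 := by
            ext
            simp
          rw [hzero, zero_add, Fin.cast_val_eq_self]
        rwa [h2] at h1
      have hle : p ≤ b₀.card := by
        have := Finset.card_le_card_of_injOn (s := (Finset.univ : Finset (Fin p)))
          (t := b₀) (f := fun y : Fin p => (Sum.inr y : γ))
          (fun y _ => hall y) (fun a _ b _ h => Sum.inr_injective h)
        simpa using this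
      omega
    -- stepping lemma : if σ^d fixes b₀ with 0 < d < p then contradiction
    have hB : ∀ d : ℕ, 0 < d → d < p → b₀.map ((σ ^ d).toEmbedding) = b₀ → False := by
      intro d hd1 hd2 hfixd
      have hmul : ∀ t : ℕ, b₀.map ((σ ^ (d * t)).toEmbedding) = b₀ := by
        intro t
        induction t with
        | zero => rw [Nat.mul_zero, pow_zero, map_perm_one]
        | succ t ih =>
          have hdt : d * (t + 1) = d * t + d := by ring
          rw [hdt, pow_add, map_perm_mul, hfixd, ih]
      have hmod : ∀ a : ℕ, σ ^ a = σ ^ (a % p) := by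
        intro a
        conv_lhs => rw [← Nat.div_add_mod a p]
        rw [pow_add, pow_mul, hσp, one_pow, one_mul]
      -- find t with d * t ≡ 1 mod p
      have hdcop : ¬ ((p : ℕ) ∣ d) := Nat.not_dvd_of_pos_of_lt hd1 hd2
      have hdz : (d : ZMod p) ≠ 0 := by
        rwa [Ne, ZMod.natCast_eq_zero_iff]
      set t : ℕ := ((d : ZMod p)⁻¹).val with ht
      have htval : ((d * t : ℕ) : ZMod p) = 1 := by
        push_cast
        rw [ht, ZMod.natCast_val, ZMod.cast_id]
        exact mul_inv_cancel₀ hdz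
      have hmod1 : (d * t) % p = 1 := by
        haveI : Fact (1 < p) := ⟨by omega⟩
        have hv := ZMod.val_natCast (n := p) (d * t)
        rw [htval, ZMod.val_one] at hv
        omega
      have : b₀.map (σ.toEmbedding) = b₀ := by
        have h1 := hmul t
        rw [hmod (d * t), hmod1, pow_one] at h1
        exact h1
      exact hA this
    -- the orbit of b₀ has p distinct blocks
    set T : Finset (Finset γ) := (Finset.range p).image (fun k => b₀.map ((σ ^ k).toEmbedding))
      with hT
    have haux : ∀ j k : ℕ, j ≤ k → k < p →
        b₀.map ((σ ^ j).toEmbedding) = b₀.map ((σ ^ k).toEmbedding) → j = k := by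
      intro j k hjk hkp heq
      by_contra hne
      have hjk' : j < k := lt_of_le_of_ne hjk hne
      have hsplit : (σ ^ k) = σ ^ j * σ ^ (k - j) := by
        rw [← pow_add]
        congr 1
        omega
      have hmm : b₀.map ((σ ^ k).toEmbedding)
          = (b₀.map ((σ ^ (k - j)).toEmbedding)).map ((σ ^ j).toEmbedding) := by
        rw [hsplit, map_perm_mul]
      rw [hmm] at heq
      have : b₀ = b₀.map ((σ ^ (k - j)).toEmbedding) :=
        Finset.map_injective _ heq
      exact hB (k - j) (by omega) (by omega) this.symm
    have hTcard : T.card = p := by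
      rw [hT, Finset.card_image_of_injOn, Finset.card_range]
      intro j hj k hk heq
      simp only [Finset.mem_coe, Finset.mem_range] at hj hk
      rcases le_total j k with h | h
      · exact haux j k h hk heq
      · exact (haux k j h hj heq.symm).symm
    have hTsub : T ⊆ P.1.parts := by
      intro b hb
      rw [hT, mem_image] at hb
      obtain ⟨k, _, rfl⟩ := hb
      exact hmemk k b₀ hb₀P
    have hTP : T = P.1.parts :=
      Finset.eq_of_subset_of_card_le hTsub (by rw [hcard, hTcard]; exact hm2)
    -- now find the block of an element of `Fin i`
    set w : γ := Sum.inl (⟨0, hi1⟩ : Fin i) with hw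
    obtain ⟨bw, hbwP, hwbw⟩ := P.1.exists_mem (Finset.mem_univ w)
    rw [← hTP, hT, mem_image] at hbwP
    obtain ⟨k, _, rfl⟩ := hbwP
    rw [Finset.mem_map] at hwbw
    obtain ⟨z, hz, hzw⟩ := hwbw
    have hzz : z = w := by
      rcases z with a | y
      · rw [← hzw]
        exact (hσinl k a).symm
      · exfalso
        have := hσinr k y
        rw [show ((σ ^ k).toEmbedding (Sum.inr y)) = (σ ^ k) (Sum.inr y) from rfl, this] at hzw
        exact Sum.inr_ne_inl hzw
    rw [hzz] at hz
    -- w is in b₀ and fixed by σ, so b₀ and its image share w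
    have hw1 : w ∈ b₀.map σ.toEmbedding := by
      rw [Finset.mem_map]
      refine ⟨w, hz, ?_⟩
      show σ w = w
      have h1 := hσinl 1 (⟨0, hi1⟩ : Fin i)
      rwa [pow_one] at h1
    have hd := P.1.disjoint (hmem b₀ hb₀P) hb₀P hA
    exact (Finset.disjoint_left.mp hd) hw1 hz
  -- conclude by the fixed point congruence
  have hmodeq := hPG.card_modEq_card_fixedPoints (RP γ m (p - 1))
  have h0 : Nat.card (MulAction.fixedPoints (Subgroup.zpowers τ) (RP γ m (p - 1))) = 0 :=
    Nat.card_of_isEmpty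
  rw [h0] at hmodeq
  exact (Nat.modEq_zero_iff_dvd).1 hmodeq
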